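/- Let n ∈ {2,3} and let u = (u_ij) be an n×n magic unitary over a unital C*-algebra A, i.e., every entry u_ij is a projection and each row sum Σ_j u_ij and each column sum Σ_i u_ij equals 1. Then the entries u_ij pairwise commute. -/

import Mathlib

section aux
variable {A : Type*} [CStarAlgebra A]

private lemma magic_aux_orth (p q r : A) (hp : star p = p ∧ p * p = p)
    (hq : star q = q ∧ q * q = q) (hr : star r = r ∧ r * r = r)
    (h : p + q + r = 1) : q * p = 0 := by
  letI := CStarAlgebra.spectralOrder A
  letI := CStarAlgebra.spectralOrderedRing A
  have hsum : p * q * p + p * r * p = 0 := by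
    have h2 : p * (p + q + r) * p = p := by rw [h, mul_one, hp.2]
    have h3 : p * (p + q + r) * p = p + (p * q * p + p * r * p) := by
      rw [mul_add, mul_add, add_mul, add_mul, hp.2, hp.2]; abel
    rw [h3] at h2
    exact add_eq_left.mp h2
  have hq0 : (0 : A) ≤ p * q * p := by
    have := star_mul_self_nonneg (q * p)
    rwa [star_mul, hp.1, hq.1, show p * q * (q * p) = p * (q * q) * p by noncomm_ring,
      hq.2] at this
  have hr0 : (0 : A) ≤ p * r * p := by
    have := star_mul_self_nonneg (r * p)
    rwa [star_mul, hp.1, hr.1, show p * r * (r * p) = p * (r * r) * p by noncomm_ring,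
      hr.2] at this
  have hpqp : p * q * p = 0 := by
    have hle : p * q * p ≤ 0 := by
      calc p * q * p ≤ p * q * p + p * r * p := le_add_of_nonneg_right hr0
        _ = 0 := hsum
    exact le_antisymm hle hq0
  have : star (q * p) * (q * p) = 0 := by
    rw [star_mul, hp.1, hq.1, show p * q * (q * p) = p * (q * q) * p by noncomm_ring, hq.2, hpqp]
  exact (CStarRing.star_mul_self_eq_zero_iff _).mp this

private lemma magic_aux_orth3 (a b c : A) (ha : star a = a ∧ a * a = a)
    (hb : star b = b ∧ b * b = b) (hc : star c = c ∧ c * c = c)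
    (h : a + b + c = 1) :
    a * b = 0 ∧ b * a = 0 ∧ a * c = 0 ∧ c * a = 0 ∧ b * c = 0 ∧ c * b = 0 :=
  ⟨magic_aux_orth b a c hb ha hc (by rw [← h]; abel),
   magic_aux_orth a b c ha hb hc h,
   magic_aux_orth c a b hc ha hb (by rw [← h]; abel),
   magic_aux_orth a c b ha hc hb (by rw [← h]; abel),
   magic_aux_orth c b a hc hb ha (by rw [← h]; abel),
   magic_aux_orth b c a hb hc ha (by rw [← h]; abel)⟩

private lemma magic_orth3 (w : Fin 3 → A) (hp : ∀ c, star (w c) = w c ∧ w c * w c = w c)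
    (hs : ∑ c, w c = 1) : ∀ j l, j ≠ l → w j * w l = 0 := by
  have h3 : w 0 + w 1 + w 2 = 1 := by rw [← hs, Fin.sum_univ_three]
  obtain ⟨h1, h2, h3', h4, h5, h6⟩ :=
    magic_aux_orth3 (w 0) (w 1) (w 2) (hp 0) (hp 1) (hp 2) h3
  intro j l hjl
  fin_cases j <;> fin_cases l <;>
    first
      | exact absurd rfl hjl
      | exact h1 | exact h2 | exact h3' | exact h4 | exact h5 | exact h6

private lemma fin3_third (j l : Fin 3) (h : j ≠ l) :
    ∃ m : Fin 3, j ≠ m ∧ l ≠ m ∧ ∀ (w : Fin 3 → A), ∑ c, w c = w j + w l + w m := by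
  fin_cases j <;> fin_cases l <;>
    first
      | exact absurd rfl h
      | exact ⟨0, by decide, by decide, fun w => by rw [Fin.sum_univ_three]; simp only [Fin.isValue, Fin.mk_zero, Fin.mk_one, Fin.reduceFinMk] <;> abel_nf⟩
      | exact ⟨1, by decide, by decide, fun w => by rw [Fin.sum_univ_three]; simp only [Fin.isValue, Fin.mk_zero, Fin.mk_one, Fin.reduceFinMk] <;> abel_nf⟩
      | exact ⟨2, by decide, by decide, fun w => by rw [Fin.sum_univ_three]; simp only [Fin.isValue, Fin.mk_zero, Fin.mk_one, Fin.reduceFinMk] <;> abel_nf⟩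

private lemma magic3_offdiag (u : Fin 3 → Fin 3 → A)
    (hproj : ∀ i j, star (u i j) = u i j ∧ u i j * u i j = u i j)
    (hrow : ∀ i, ∑ j, u i j = 1) (hcol : ∀ j, ∑ i, u i j = 1)
    (i k j l : Fin 3) (hik : i ≠ k) (hjl : j ≠ l) : Commute (u i j) (u k l) := by
  have rowO : ∀ i : Fin 3, ∀ a b : Fin 3, a ≠ b → u i a * u i b = 0 := fun i a b h =>
    magic_orth3 (u i) (fun c => hproj i c) (hrow i) a b h
  have colO : ∀ c : Fin 3, ∀ a b : Fin 3, a ≠ b → u a c * u b c = 0 := fun c a b h =>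
    magic_orth3 (fun r => u r c) (fun r => hproj r c) (hcol c) a b h
  obtain ⟨m, hjm, hlm, hsum⟩ := fin3_third (A := A) j l hjl
  have hrowi : u i j + u i l + u i m = 1 := by rw [← hsum (fun c => u i c)]; exact hrow i
  have hrowk : u k j + u k l + u k m = 1 := by rw [← hsum (fun c => u k c)]; exact hrow k
  have hq_eq : u k l = 1 - u k j - u k m := by rw [← hrowk]; abel
  have t1 : u i j * u k l * u i l = 0 := by
    rw [mul_assoc, colO l k i hik.symm, mul_zero]
  have t2 : u i j * u k l * u i m = 0 := by
    rw [hq_eq, show u i j * (1 - u k j - u k m) * u i m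
        = u i j * u i m - u i j * u k j * u i m - u i j * (u k m * u i m) by noncomm_ring,
      rowO i j m hjm, colO j i k hik, colO m k i hik.symm]
    simp
  have key : u i j * u k l = u i j * u k l * u i j := by
    have h1 : u i j * u k l * (u i j + u i l + u i m) = u i j * u k l := by
      rw [hrowi, mul_one]
    calc u i j * u k l = u i j * u k l * (u i j + u i l + u i m) := h1.symm
      _ = u i j * u k l * u i j + u i j * u k l * u i l
          + u i j * u k l * u i m := by noncomm_ring
      _ = u i j * u k l * u i j := by rw [t1, t2, add_zero, add_zero]
  have : u k l * u i j = u i j * u k l := by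
    have hstar : star (u i j * u k l) = u k l * u i j := by
      rw [star_mul, (hproj i j).1, (hproj k l).1]
    calc u k l * u i j = star (u i j * u k l) := hstar.symm
      _ = star (u i j * u k l * u i j) := by rw [← key]
      _ = u i j * (u k l * u i j) := by
          rw [star_mul, star_mul, (hproj i j).1, (hproj k l).1]
      _ = u i j * u k l * u i j := by rw [← mul_assoc]
      _ = u i j * u k l := key.symm
  exact this.symm

end aux

/-- the entries of an `n × n` magic unitary over a unital C*-algebra
pairwise commute when `n = 2` or `n = 3`. -/
theorem magic_unitary_entries_commute_of_small {A : Type*} [CStarAlgebra A]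
    (n : ℕ) (hn : n = 2 ∨ n = 3) (u : Fin n → Fin n → A)
    (hproj : ∀ i j, star (u i j) = u i j ∧ u i j * u i j = u i j)
    (hrow : ∀ i, ∑ j, u i j = 1)
    (hcol : ∀ j, ∑ i, u i j = 1) :
    ∀ i j k l, Commute (u i j) (u k l) := by
  rcases hn with rfl | rfl
  · -- n = 2
    have h01 : u 0 1 = 1 - u 0 0 := by
      have hs : u 0 0 + u 0 1 = 1 := by rw [← Fin.sum_univ_two (u 0)]; exact hrow 0
      exact eq_sub_of_add_eq' hs
    have h10 : u 1 0 = 1 - u 0 0 := by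
      have hs : u 0 0 + u 1 0 = 1 := by
        rw [← Fin.sum_univ_two (fun r => u r 0)]; exact hcol 0
      exact eq_sub_of_add_eq' hs
    have h11 : u 1 1 = u 0 0 := by
      have hs : u 0 1 + u 1 1 = 1 := by
        rw [← Fin.sum_univ_two (fun r => u r 1)]; exact hcol 1
      have := eq_sub_of_add_eq' hs
      rw [this, h01, sub_sub_cancel]
    intro i j k l
    fin_cases i <;> fin_cases j <;> fin_cases k <;> fin_cases l <;>
      simp only [Fin.zero_eta, Fin.mk_one, h01, h10, h11] <;>
      (unfold Commute SemiconjBy; noncomm_ring)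
  · -- n = 3
    intro i j k l
    have rowO : ∀ i a b : Fin 3, a ≠ b → u i a * u i b = 0 := fun i a b h =>
      magic_orth3 (u i) (fun c => hproj i c) (hrow i) a b h
    have colO : ∀ c a b : Fin 3, a ≠ b → u a c * u b c = 0 := fun c a b h =>
      magic_orth3 (fun r => u r c) (fun r => hproj r c) (hcol c) a b h
    rcases eq_or_ne i k with rfl | hik
    · rcases eq_or_ne j l with rfl | hjl
      · exact Commute.refl _
      · show u i j * u i l = u i l * u i j
        rw [rowO i j l hjl, rowO i l j hjl.symm]
    · rcases eq_or_ne j l with rfl | hjl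
      · show u i j * u k j = u k j * u i j
        rw [colO j i k hik, colO j k i hik.symm]
      · exact magic3_offdiag u hproj hrow hcol i k j l hik hjl
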